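/- Let V be a finite set, let x be a fractional allocation on V, and let e ⊆ V be a nonempty hyperedge with a designated representative r(e) ∈ e; let d(e) = Σ_{i=1}^k (x(r(e),i) − min_{v ∈ e} x(v,i)). For θ ∈ (1/2, 1] define A(i,θ) = {v ∈ V : x(v,i) ≥ θ} for i = 1,…,k−1 and U(θ) = V \ (A(1,θ) ∪ ⋯ ∪ A(k−1,θ)). Say e is cut at θ if e is not entirely contained in a single one of the parts A(1,θ), …, A(k−1,θ), U(θ). Then the probability over a uniformly random θ ∈ (1/2, 1] that e is cut is at most 2 d(e). -/

import Mathlib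

open scoped BigOperators

/-- `min_{v ∈ e} g(v)` (with junk value `0` for `e = ∅`). -/
noncomputable def fmin {V : Type*} (e : Finset V) (g : V → ℝ) : ℝ :=
  if h : e.Nonempty then e.inf' h g else 0

/-- **Half-rounding cuts a hyperedge with probability at most `2 d(e)`.**
Let `x` be a fractional allocation on a finite set `V`, and let `e ⊆ V` be a
nonempty hyperedge with representative `r(e) ∈ e`; let
`d(e) = ∑_i (x(r(e),i) − min_{v∈e} x(v,i))`. For `θ ∈ (1/2, 1]` set
`A(i,θ) = {v : x(v,i) ≥ θ}` for `i = 1,…,k−1` and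
`U(θ) = V \ (A(1,θ) ∪ ⋯ ∪ A(k−1,θ))`; `e` is cut at `θ` if it is not entirely
contained in one of the parts `A(1,θ), …, A(k−1,θ), U(θ)`. Then the probability
over a uniformly random `θ ∈ (1/2,1]` that `e` is cut is at most `2 d(e)`. -/
theorem half_rounding_cut_probability
    {V : Type*} [Fintype V] [DecidableEq V]
    (k : ℕ) (x : V → Fin k → ℝ)
    (hx01 : ∀ v i, x v i ∈ Set.Icc (0:ℝ) 1)
    (hxsum : ∀ v, ∑ i, x v i = 1)
    (e : Finset V) (he : e.Nonempty) (re : V) (hre : re ∈ e) :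
    MeasureTheory.volume
        {θ : ℝ | θ ∈ Set.Ioc (1/2 : ℝ) 1 ∧
          ¬ ((∃ i : Fin k, (i : ℕ) < k - 1 ∧
                e ⊆ Finset.univ.filter (fun v => θ ≤ x v i)) ∨
             e ⊆ Finset.univ \ (Finset.univ.biUnion (fun i : Fin k =>
                if (i : ℕ) < k - 1 then Finset.univ.filter (fun v => θ ≤ x v i)
                else ∅)))}
      / MeasureTheory.volume (Set.Ioc (1/2 : ℝ) 1)
      ≤ ENNReal.ofReal (2 * ∑ i, (x re i - fmin e (fun v => x v i))) := by
  classical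
  -- k = 0 is impossible
  rcases Nat.eq_zero_or_pos k with hk0 | hkpos
  · subst hk0
    have := hxsum re
    simp at this
  -- unfold fmin
  have hfm : ∀ i : Fin k, fmin e (fun v => x v i) = e.inf' he (fun v => x v i) :=
    fun i => dif_pos he
  simp only [hfm]
  have hmle : ∀ (i : Fin k), ∀ v ∈ e, e.inf' he (fun w => x w i) ≤ x v i :=
    fun i v hv => Finset.inf'_le _ hv
  have hd0 : 0 ≤ ∑ i, (x re i - e.inf' he (fun v => x v i)) :=
    Finset.sum_nonneg fun i _ => sub_nonneg.2 (hmle i re hre)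
  -- reduce the division
  refine ENNReal.div_le_of_le_mul ?_
  have hrhs : ENNReal.ofReal (2 * ∑ i, (x re i - e.inf' he (fun v => x v i)))
      * MeasureTheory.volume (Set.Ioc (1/2 : ℝ) 1)
      = ENNReal.ofReal (∑ i, (x re i - e.inf' he (fun v => x v i))) := by
    rw [Real.volume_Ioc, ← ENNReal.ofReal_mul (by linarith)]
    congr 1
    ring
  rw [hrhs]
  -- case k = 1 : the cut set is empty
  rcases eq_or_lt_of_le (Nat.succ_le_of_lt hkpos) with hk1 | hk2
  · have hempty : {θ : ℝ | θ ∈ Set.Ioc (1/2 : ℝ) 1 ∧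
          ¬ ((∃ i : Fin k, (i : ℕ) < k - 1 ∧
                e ⊆ Finset.univ.filter (fun v => θ ≤ x v i)) ∨
             e ⊆ Finset.univ \ (Finset.univ.biUnion (fun i : Fin k =>
                if (i : ℕ) < k - 1 then Finset.univ.filter (fun v => θ ≤ x v i)
                else ∅)))} = ∅ := by
      ext θ
      simp only [Set.mem_setOf_eq, Set.mem_empty_iff_false, iff_false, not_and, not_not]
      intro _
      refine Or.inr fun v hv => ?_
      refine Finset.mem_sdiff.2 ⟨Finset.mem_univ v, ?_⟩
      intro hvb
      obtain ⟨i, -, hi⟩ := Finset.mem_biUnion.1 hvb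
      rw [if_neg (by omega : ¬ (i : ℕ) < k - 1)] at hi
      exact absurd hi (Finset.notMem_empty v)
    rw [hempty]
    simp
  -- main case : k ≥ 2
  set S : Finset (Fin k) := Finset.univ.filter (fun i : Fin k => (i : ℕ) < k - 1) with hSdef
  have hS : S.Nonempty := ⟨⟨0, by omega⟩, by simp [hSdef]; omega⟩
  set M : Fin k → ℝ := fun i => e.sup' he (fun v => x v i) with hMdef
  set Mstar : ℝ := S.sup' hS M with hMstar_def
  set mhat : ℝ := S.sup' hS (fun i => e.inf' he (fun v => x v i)) with hmhat_def
  set L : ℝ := max (1/2 : ℝ) mhat with hLdef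
  -- the cut set is contained in the interval (L, Mstar]
  have hsub : {θ : ℝ | θ ∈ Set.Ioc (1/2 : ℝ) 1 ∧
          ¬ ((∃ i : Fin k, (i : ℕ) < k - 1 ∧
                e ⊆ Finset.univ.filter (fun v => θ ≤ x v i)) ∨
             e ⊆ Finset.univ \ (Finset.univ.biUnion (fun i : Fin k =>
                if (i : ℕ) < k - 1 then Finset.univ.filter (fun v => θ ≤ x v i)
                else ∅)))} ⊆ Set.Ioc L Mstar := by
    rintro θ ⟨hθ, hcut⟩
    push_neg at hcut
    obtain ⟨hcut1, hcut2⟩ := hcut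
    constructor
    · refine max_lt hθ.1 ?_
      rw [hmhat_def, Finset.sup'_lt_iff]
      intro i hiS
      have hik : (i : ℕ) < k - 1 := (Finset.mem_filter.1 hiS).2
      obtain ⟨v, hv, hxv⟩ := Finset.not_subset.1 (hcut1 i hik)
      have hxv' : x v i < θ := by
        by_contra h
        exact hxv (Finset.mem_filter.2 ⟨Finset.mem_univ v, not_lt.1 h⟩)
      exact lt_of_le_of_lt (hmle i v hv) hxv'
    · obtain ⟨v, hv, hvmem⟩ := Finset.not_subset.1 hcut2
      have hvb : v ∈ Finset.univ.biUnion (fun i : Fin k =>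
          if (i : ℕ) < k - 1 then Finset.univ.filter (fun w => θ ≤ x w i) else ∅) := by
        by_contra h
        exact hvmem (Finset.mem_sdiff.2 ⟨Finset.mem_univ v, h⟩)
      obtain ⟨i, -, hi⟩ := Finset.mem_biUnion.1 hvb
      by_cases hik : (i : ℕ) < k - 1
      · rw [if_pos hik] at hi
        have hxvi : θ ≤ x v i := (Finset.mem_filter.1 hi).2
        have h1 : x v i ≤ M i := Finset.le_sup' (fun w => x w i) hv
        have h2 : M i ≤ Mstar :=
          Finset.le_sup' M (Finset.mem_filter.2 ⟨Finset.mem_univ i, hik⟩)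
        linarith
      · rw [if_neg hik] at hi
        exact absurd hi (Finset.notMem_empty v)
  -- the key real inequality : Mstar - L ≤ d
  have hreal : Mstar - L ≤ ∑ i, (x re i - e.inf' he (fun v => x v i)) := by
    obtain ⟨istar, histar, hMstar⟩ := Finset.exists_mem_eq_sup' hS M
    obtain ⟨u, hu, hueq⟩ := Finset.exists_mem_eq_sup' he (fun v => x v istar)
    obtain ⟨ihat, hihat, hmhat⟩ :=
      Finset.exists_mem_eq_sup' hS (fun i => e.inf' he (fun v => x v i))
    have hMu : Mstar = x u istar := by
      rw [hMstar_def, hMstar]; exact hueq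
    have hd_eq : ∑ i, (x re i - e.inf' he (fun v => x v i))
        = 1 - ∑ i, e.inf' he (fun v => x v i) := by
      rw [Finset.sum_sub_distrib, hxsum re]
    -- ∑ m ≤ m istar + (1 - x u istar)
    have hsplit_m : e.inf' he (fun v => x v istar)
        + ∑ i ∈ Finset.univ.erase istar, e.inf' he (fun v => x v i)
        = ∑ i, e.inf' he (fun v => x v i) :=
      Finset.add_sum_erase _ (fun i => e.inf' he (fun v => x v i)) (Finset.mem_univ istar)
    have hsplit_x : x u istar + ∑ i ∈ Finset.univ.erase istar, x u i = 1 := by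
      rw [Finset.add_sum_erase _ (fun i => x u i) (Finset.mem_univ istar)]
      exact hxsum u
    have herase : ∑ i ∈ Finset.univ.erase istar, e.inf' he (fun v => x v i)
        ≤ ∑ i ∈ Finset.univ.erase istar, x u i :=
      Finset.sum_le_sum fun i _ => hmle i u hu
    have hsum_m : ∑ i, e.inf' he (fun v => x v i)
        ≤ e.inf' he (fun v => x v istar) + (1 - x u istar) := by linarith
    have hmistar_le : e.inf' he (fun v => x v istar) ≤ mhat := by
      rw [hmhat_def]
      exact Finset.le_sup' (fun i => e.inf' he (fun v => x v i)) histar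
    by_cases hmh : mhat ≤ 1/2
    · have hL : L = 1/2 := max_eq_left hmh
      rw [hL, hd_eq]
      linarith
    · have hL : L = mhat := max_eq_right (le_of_lt (not_le.1 hmh))
      rw [hL, hd_eq]
      by_cases hii : ihat = istar
      · have hme : mhat = e.inf' he (fun v => x v istar) := by
          have h := hmhat; rw [hii] at h; exact h
        linarith
      · -- x u istar + x u ihat ≤ 1
        have hpair : x u istar + x u ihat ≤ 1 := by
          have hsub2 : ({istar, ihat} : Finset (Fin k)) ⊆ Finset.univ :=
            Finset.subset_univ _
          have := Finset.sum_le_sum_of_subset_of_nonneg hsub2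
            (fun i _ _ => (hx01 u i).1)
          rw [Finset.sum_pair (Ne.symm hii), hxsum u] at this
          exact this
        have hmh2 : mhat ≤ x u ihat :=
          le_of_eq_of_le hmhat (hmle ihat u hu)
        have hmile : e.inf' he (fun v => x v istar) ≤ x u istar := hmle istar u hu
        have hmh3 : (1:ℝ)/2 < mhat := not_le.1 hmh
        linarith
  calc MeasureTheory.volume {θ : ℝ | θ ∈ Set.Ioc (1/2 : ℝ) 1 ∧
          ¬ ((∃ i : Fin k, (i : ℕ) < k - 1 ∧
                e ⊆ Finset.univ.filter (fun v => θ ≤ x v i)) ∨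
             e ⊆ Finset.univ \ (Finset.univ.biUnion (fun i : Fin k =>
                if (i : ℕ) < k - 1 then Finset.univ.filter (fun v => θ ≤ x v i)
                else ∅)))}
      ≤ MeasureTheory.volume (Set.Ioc L Mstar) := MeasureTheory.measure_mono hsub
    _ = ENNReal.ofReal (Mstar - L) := Real.volume_Ioc
    _ ≤ ENNReal.ofReal (∑ i, (x re i - e.inf' he (fun v => x v i))) :=
        ENNReal.ofReal_le_ofReal hreal
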